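/- For i.i.d. weights W_i with mean 1, variance τ², and kurtosis κ (so E(W−1)^4 = (κ+3)τ⁴), and fixed residuals Y_i with ∑_i Z_i Y_i = 0, the single-replicate estimator V̂ = ((1/N)∑_i Z_i W_i Y_i)² satisfies Var_W(V̂) = (σ⁴τ⁴/N²)(2 + κ(κ_x+3)/N), where σ² = (1/N)∑_i Z_i Y_i² and κ_x = (1/N)∑_i Z_i Y_i⁴/σ⁴ − 3. -/

import Mathlib

open scoped BigOperators
open MeasureTheory ProbabilityTheory


lemma aux_int_pow {Ω : Type*} [MeasurableSpace Ω] {μ : Measure Ω} [IsProbabilityMeasure μ]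
    {f : Ω → ℝ} (hm : Measurable f) (h4 : Integrable (fun ω => f ω ^ 4) μ)
    {m : ℕ} (hm4 : m ≤ 4) : Integrable (fun ω => f ω ^ m) μ := by
  refine Integrable.mono' ((integrable_const (1:ℝ)).add h4) ((hm.pow_const m).aestronglyMeasurable)
    (Filter.Eventually.of_forall fun ω => ?_)
  have h0 : (0:ℝ) ≤ f ω ^ 4 := by positivity
  show ‖f ω ^ m‖ ≤ 1 + f ω ^ 4
  rw [Real.norm_eq_abs, abs_pow]
  have h2 : |f ω| ^ 4 = f ω ^ 4 := by rw [pow_abs, abs_of_nonneg h0]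
  rcases le_total (|f ω|) 1 with h | h
  · have : |f ω| ^ m ≤ 1 := pow_le_one₀ (abs_nonneg _) h
    linarith
  · have h1 : |f ω| ^ m ≤ |f ω| ^ 4 := pow_le_pow_right₀ h hm4
    linarith

lemma aux_moments {Ω ι : Type*} [MeasurableSpace Ω] {μ : Measure Ω} [IsProbabilityMeasure μ]
    (τ2 κ4 : ℝ) (X : ι → Ω → ℝ) (hmeas : ∀ i, Measurable (X i))
    (hindep : iIndepFun X μ)
    (hint4 : ∀ i, Integrable (fun ω => X i ω ^ 4) μ)
    (h1 : ∀ i, ∫ ω, X i ω ∂μ = 0)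
    (h2 : ∀ i, ∫ ω, X i ω ^ 2 ∂μ = τ2)
    (h4 : ∀ i, ∫ ω, X i ω ^ 4 ∂μ = κ4)
    (a : ι → ℝ) (s : Finset ι) :
    (∀ k, k ≤ 4 → Integrable (fun ω => (∑ i ∈ s, a i * X i ω) ^ k) μ) ∧
    (∫ ω, (∑ i ∈ s, a i * X i ω) ∂μ = 0) ∧
    (∫ ω, (∑ i ∈ s, a i * X i ω) ^ 2 ∂μ = τ2 * ∑ i ∈ s, a i ^ 2) ∧
    (∫ ω, (∑ i ∈ s, a i * X i ω) ^ 4 ∂μ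
      = 3 * τ2 ^ 2 * (∑ i ∈ s, a i ^ 2) ^ 2 + (κ4 - 3 * τ2 ^ 2) * ∑ i ∈ s, a i ^ 4) := by
  classical
  -- the scaled family
  set g : ι → Ω → ℝ := fun j ω => a j * X j ω with hg
  have hgmeas : ∀ j, Measurable (g j) := fun j => (hmeas j).const_mul (a j)
  have hgindep : iIndepFun g μ :=
    hindep.comp (fun j x => a j * x) (fun j => measurable_id.const_mul (a j))
  have hgint : ∀ j, ∀ m, m ≤ 4 → Integrable (fun ω => g j ω ^ m) μ := by
    intro j m hm
    have : (fun ω => g j ω ^ m) = fun ω => a j ^ m * X j ω ^ m := by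
      funext ω; simp [hg, mul_pow]
    rw [this]
    exact (aux_int_pow (hmeas j) (hint4 j) hm).const_mul _
  have hgm : ∀ j, ∀ m, ∫ ω, g j ω ^ m ∂μ = a j ^ m * ∫ ω, X j ω ^ m ∂μ := by
    intro j m
    simp only [hg, mul_pow]
    exact integral_const_mul _ _
  induction s using Finset.induction_on with
  | empty => 
    refine ⟨fun k hk => ?_, by simp, by simp, by simp⟩
    simp only [Finset.sum_empty]
    exact integrable_const _
  | insert i s hi ih =>
    obtain ⟨ihInt, ih1, ih2, ih4⟩ := ih
    set T : Ω → ℝ := fun ω => ∑ j ∈ s, a j * X j ω with hT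
    have hTmeas : Measurable T := Finset.measurable_sum s (fun j _ => (hmeas j).const_mul (a j))
    have hIndST : IndepFun (∑ j ∈ s, g j) (g i) μ :=
      hgindep.indepFun_finsetSum_of_notMem hgmeas hi
    have hsum_eq : (∑ j ∈ s, g j) = T := by funext ω; simp [hT, hg]
    have hInd : IndepFun (g i) T μ := by rw [← hsum_eq]; exact hIndST.symm
    have hIndmk : ∀ m k : ℕ, IndepFun (fun ω => g i ω ^ m) (fun ω => T ω ^ k) μ :=
      fun m k => hInd.comp (measurable_id.pow_const m) (measurable_id.pow_const k)
    -- expansion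
    have hexp : ∀ k : ℕ, ∀ ω, (∑ j ∈ insert i s, a j * X j ω) ^ k
        = ∑ m ∈ Finset.range (k + 1), (k.choose m : ℝ) * (g i ω ^ m * T ω ^ (k - m)) := by
      intro k ω
      rw [Finset.sum_insert hi, add_pow]
      refine Finset.sum_congr rfl fun m _ => ?_
      simp [hg, hT]; ring
    have hIntTerm : ∀ k m : ℕ, m ≤ 4 → k - m ≤ 4 →
        Integrable (fun ω => (k.choose m : ℝ) * (g i ω ^ m * T ω ^ (k - m))) μ :=
      fun k m hm hkm =>
        (((hIndmk m (k - m)).integrable_mul (hgint i m hm) (ihInt _ hkm)).const_mul _)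
    have hIntIns : ∀ k, k ≤ 4 → Integrable (fun ω => (∑ j ∈ insert i s, a j * X j ω) ^ k) μ := by
      intro k hk
      have : (fun ω => (∑ j ∈ insert i s, a j * X j ω) ^ k)
          = fun ω => ∑ m ∈ Finset.range (k + 1), (k.choose m : ℝ) * (g i ω ^ m * T ω ^ (k - m)) := by
        funext ω; exact hexp k ω
      rw [this]
      exact integrable_finset_sum _ fun m hm' => hIntTerm k m (by have := Finset.mem_range.mp hm'; omega) (by omega)
    have key : ∀ k, k ≤ 4 → ∫ ω, (∑ j ∈ insert i s, a j * X j ω) ^ k ∂μ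
        = ∑ m ∈ Finset.range (k + 1),
            (k.choose m : ℝ) * ((∫ ω, g i ω ^ m ∂μ) * ∫ ω, T ω ^ (k - m) ∂μ) := by
      intro k hk
      have e1 : (fun ω => (∑ j ∈ insert i s, a j * X j ω) ^ k)
          = fun ω => ∑ m ∈ Finset.range (k + 1), (k.choose m : ℝ) * (g i ω ^ m * T ω ^ (k - m)) :=
        funext (hexp k)
      rw [e1, integral_finset_sum _ (fun m hm' =>
        hIntTerm k m (by have := Finset.mem_range.mp hm'; omega) (by omega))]
      refine Finset.sum_congr rfl fun m hm' => ?_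
      rw [integral_const_mul]
      congr 1
      have hprod : (fun ω => g i ω ^ m * T ω ^ (k - m))
          = (fun ω => g i ω ^ m) * (fun ω => T ω ^ (k - m)) := rfl
      rw [hprod, (hIndmk m (k - m)).integral_mul_eq_mul_integral
        (hgint i m (by have := Finset.mem_range.mp hm'; omega)).aestronglyMeasurable (ihInt _ (by omega)).aestronglyMeasurable]
    have hg1 : ∫ ω, g i ω ^ 1 ∂μ = 0 := by
      have := hgm i 1
      simp only [pow_one] at this ⊢
      rw [this, h1, mul_zero]
    have hg2 : ∫ ω, g i ω ^ 2 ∂μ = a i ^ 2 * τ2 := by rw [hgm, h2]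
    have hg4 : ∫ ω, g i ω ^ 4 ∂μ = a i ^ 4 * κ4 := by rw [hgm, h4]
    have hT1 : ∫ ω, T ω ^ 1 ∂μ = 0 := by
      simp only [pow_one]; exact ih1
    have hg1' : ∫ ω, g i ω ∂μ = 0 := by simpa using hg1
    have hT1' : ∫ ω, T ω ∂μ = 0 := ih1
    have hT2 : ∫ ω, T ω ^ 2 ∂μ = τ2 * ∑ j ∈ s, a j ^ 2 := ih2
    have hT4 : ∫ ω, T ω ^ 4 ∂μ
        = 3 * τ2 ^ 2 * (∑ j ∈ s, a j ^ 2) ^ 2 + (κ4 - 3 * τ2 ^ 2) * ∑ j ∈ s, a j ^ 4 := ih4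
    refine ⟨hIntIns, ?_, ?_, ?_⟩
    · have h := key 1 (by omega)
      simp only [pow_one] at h
      rw [h]
      simp [Finset.sum_range_succ, hg1', hT1']
    · have h := key 2 (by omega)
      rw [h]
      simp only [Finset.sum_range_succ, Finset.sum_range_zero]
      norm_num [hg1, hg2, hT1, hT2, hg1', hT1']
      rw [Finset.sum_insert hi]
      ring
    · have h := key 4 (by omega)
      rw [h]
      simp only [Finset.sum_range_succ, Finset.sum_range_zero]
      norm_num [hg1, hg2, hg4, hT1, hT2, hT4, hg1', hT1', Nat.choose]
      rw [Finset.sum_insert hi, Finset.sum_insert hi]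
      ring

/-- Theorem (bootstrap stability, single replicate): for i.i.d. weights with mean 1,
variance `τ²` and kurtosis `κ`, and fixed residuals `Y_i` with `∑_i Z_i Y_i = 0`,
the estimator `V̂ = ((1/N)∑_i Z_i W_i Y_i)²` has
`Var_W(V̂) = (σ⁴τ⁴/N²)(2 + κ(κ_x+3)/N)`. -/
theorem stmt12 {r : ℕ} {Ω : Type*} [MeasurableSpace Ω]
    (μp : Measure Ω) [IsProbabilityMeasure μp]
    (Z : (Fin r → ℕ) → ℝ)
    (hZ01 : ∀ i, Z i = 0 ∨ Z i = 1)
    (hZfin : (Function.support Z).Finite)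
    (N : ℝ) (hN : N = ∑ᶠ i, Z i) (hNpos : 0 < N)
    (Y : (Fin r → ℕ) → ℝ)
    (hY0 : ∑ᶠ i, Z i * Y i = 0)
    (σ2 : ℝ) (hσ2 : σ2 = (1 / N) * ∑ᶠ i, Z i * Y i ^ 2) (hσpos : 0 < σ2)
    (κx : ℝ) (hκx : κx = ((1 / N) * ∑ᶠ i, Z i * Y i ^ 4) / σ2 ^ 2 - 3)
    (τ2 κ : ℝ)
    (W : (Fin r → ℕ) → Ω → ℝ)
    (hmeas : ∀ i, Measurable (W i))
    (hindep : iIndepFun W μp)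
    (hint4 : ∀ i, Integrable (fun ω => (W i ω - 1) ^ 4) μp)
    (hWmean : ∀ i, ∫ ω, W i ω ∂μp = 1)
    (hWvar : ∀ i, ∫ ω, (W i ω - 1) ^ 2 ∂μp = τ2)
    (hWkurt : ∀ i, ∫ ω, (W i ω - 1) ^ 4 ∂μp = (κ + 3) * τ2 ^ 2) :
    (∫ ω, (((1 / N) * ∑ᶠ i, Z i * W i ω * Y i) ^ 2) ^ 2 ∂μp)
        - (∫ ω, ((1 / N) * ∑ᶠ i, Z i * W i ω * Y i) ^ 2 ∂μp) ^ 2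
      = (σ2 ^ 2 * τ2 ^ 2 / N ^ 2) * (2 + κ * (κx + 3) / N) := by
  classical
  set s : Finset (Fin r → ℕ) := hZfin.toFinset with hs
  have hsub : Function.support Z ⊆ ↑s := by simp [hs]
  set X : (Fin r → ℕ) → Ω → ℝ := fun i ω => W i ω - 1 with hX
  set a : (Fin r → ℕ) → ℝ := fun i => Z i * Y i with ha
  have hXmeas : ∀ i, Measurable (X i) := fun i => (hmeas i).sub measurable_const
  have hXindep : iIndepFun X μp :=
    hindep.comp (fun _ x => x - 1) (fun _ => measurable_id.sub measurable_const)
  have hX1 : ∀ i, ∫ ω, X i ω ∂μp = 0 := by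
    intro i
    have hWint : Integrable (X i) μp := by
      simpa using aux_int_pow (hXmeas i) (hint4 i) (m := 1) (by omega)
    have : Integrable (W i) μp := by
      have h := hWint.add (integrable_const (1:ℝ))
      have he : (fun ω => X i ω + 1) = W i := by funext ω; simp [hX]
      exact he ▸ h
    simp only [hX]
    rw [integral_sub this (integrable_const _), hWmean, integral_const]
    simp
  -- support facts
  have hZZ : ∀ i, Z i * Z i = Z i := by
    intro i; rcases hZ01 i with h | h <;> simp [h]
  have hsupp : ∀ (f : (Fin r → ℕ) → ℝ), (∀ i, Z i = 0 → f i = 0) → ∑ᶠ i, f i = ∑ i ∈ s, f i := by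
    intro f hf
    refine finsum_eq_sum_of_support_subset f ?_
    intro i hi
    apply hsub
    simp only [Function.mem_support] at hi ⊢
    intro h0; exact hi (hf i h0)
  have hNs : N = ∑ i ∈ s, Z i := by rw [hN, hsupp _ (fun i h => h)]
  have hY0s : ∑ i ∈ s, a i = 0 := by
    rw [← hsupp (fun i => Z i * Y i) (fun i h => by simp [h])]; exact hY0
  have hQ : ∑ i ∈ s, a i ^ 2 = N * σ2 := by
    have h1 : ∑ i ∈ s, a i ^ 2 = ∑ i ∈ s, Z i * Y i ^ 2 := by
      refine Finset.sum_congr rfl fun i _ => ?_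
      simp only [ha]; rcases hZ01 i with h | h <;> simp [h] <;> ring
    rw [h1, ← hsupp (fun i => Z i * Y i ^ 2) (fun i h => by simp [h]), hσ2]
    field_simp
  have hF : ∑ i ∈ s, a i ^ 4 = N * (σ2 ^ 2 * (κx + 3)) := by
    have h1 : ∑ i ∈ s, a i ^ 4 = ∑ i ∈ s, Z i * Y i ^ 4 := by
      refine Finset.sum_congr rfl fun i _ => ?_
      simp only [ha]; rcases hZ01 i with h | h <;> simp [h] <;> ring
    have h2 : (1 / N) * ∑ᶠ i, Z i * Y i ^ 4 = σ2 ^ 2 * (κx + 3) := by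
      rw [hκx]; field_simp; ring
    rw [h1, ← hsupp (fun i => Z i * Y i ^ 4) (fun i h => by simp [h])]
    have hN0 : N ≠ 0 := ne_of_gt hNpos
    rw [← h2]; field_simp
  -- rewrite the weighted sum
  have hsum : ∀ ω, ∑ᶠ i, Z i * W i ω * Y i = ∑ i ∈ s, a i * X i ω := by
    intro ω
    rw [hsupp (fun i => Z i * W i ω * Y i) (fun i h => by simp [h])]
    have : ∀ i ∈ s, Z i * W i ω * Y i = a i * X i ω + a i := by
      intro i _; simp only [ha, hX]; ring
    rw [Finset.sum_congr rfl this, Finset.sum_add_distrib, hY0s, add_zero]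
  obtain ⟨hInt, hE1, hE2, hE4⟩ := aux_moments τ2 ((κ + 3) * τ2 ^ 2) X hXmeas hXindep
    (fun i => hint4 i) hX1 (fun i => hWvar i) (fun i => hWkurt i) a s
  have hN0 : N ≠ 0 := ne_of_gt hNpos
  have e2 : (∫ ω, ((1 / N) * ∑ᶠ i, Z i * W i ω * Y i) ^ 2 ∂μp)
      = (1 / N) ^ 2 * (τ2 * (N * σ2)) := by
    have : (fun ω => ((1 / N) * ∑ᶠ i, Z i * W i ω * Y i) ^ 2)
        = fun ω => (1 / N) ^ 2 * (∑ i ∈ s, a i * X i ω) ^ 2 := by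
      funext ω; rw [hsum ω]; ring
    rw [this, integral_const_mul, hE2, hQ]
  have e4 : (∫ ω, (((1 / N) * ∑ᶠ i, Z i * W i ω * Y i) ^ 2) ^ 2 ∂μp)
      = (1 / N) ^ 4 * (3 * τ2 ^ 2 * (N * σ2) ^ 2 + ((κ + 3) * τ2 ^ 2 - 3 * τ2 ^ 2)
          * (N * (σ2 ^ 2 * (κx + 3)))) := by
    have : (fun ω => (((1 / N) * ∑ᶠ i, Z i * W i ω * Y i) ^ 2) ^ 2)
        = fun ω => (1 / N) ^ 4 * (∑ i ∈ s, a i * X i ω) ^ 4 := by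
      funext ω; rw [hsum ω]; ring
    rw [this, integral_const_mul, hE4, hQ, hF]
  rw [e2, e4]
  field_simp
  ring
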